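/- Every automorphism of the category of finitely generated free abelian groups (the full subcategory of abelian groups whose objects are the finitely generated free ℤ-modules) is inner, i.e., naturally isomorphic to the identity functor; likewise, every automorphism of the category of finitely generated free commutative monoids (the full subcategory of commutative monoids whose objects are the monoids isomorphic to ℕ^n for some n ∈ ℕ) is inner. -/

import Mathlib

open CategoryTheory

section Master
variable {C : Type*} [Category C]

/-- "pseudo-initial": all hom-sets out of `B` are subsingletons. -/
def Ini (B : C) : Prop := ∀ A : C, Subsingleton (B ⟶ A)

/-- the property characterizing the rank-one object. -/
def Pone (X : C) : Prop :=
  ¬ Ini X ∧ ∀ (B : C) (s : B ⟶ X) (r : X ⟶ B), s ≫ r = 𝟙 B → Ini B ∨ r ≫ s = 𝟙 X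

theorem Ini.of_iso {B B' : C} (h : Ini B) (e : B ≅ B') : Ini B' := by
  intro A
  constructor
  intro f g
  have := (h A).allEq (e.hom ≫ f) (e.hom ≫ g)
  calc f = e.inv ≫ (e.hom ≫ f) := by simp
    _ = e.inv ≫ (e.hom ≫ g) := by rw [this]
    _ = g := by simp

theorem Pone.of_iso {X Y : C} (h : Pone X) (e : X ≅ Y) : Pone Y := by
  constructor
  · intro hY; exact h.1 (hY.of_iso e.symm)
  · intro B s r hsr
    rcases h.2 B (s ≫ e.inv) (e.hom ≫ r) (by simpa using hsr) with h' | h'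
    · exact Or.inl h'
    · right
      have h1 : e.hom ≫ (r ≫ s) ≫ e.inv = 𝟙 X := by
        simpa [Category.assoc] using h'
      calc r ≫ s = e.inv ≫ (e.hom ≫ (r ≫ s) ≫ e.inv) ≫ e.hom := by simp [Category.assoc]
        _ = 𝟙 Y := by rw [h1]; simp

theorem Pone.transfer (E : C ≌ C) {Z : C} (h : Pone Z) : Pone (E.functor.obj Z) := by
  constructor
  · rintro hI
    refine h.1 (fun A => ?_)
    constructor
    intro f g
    have := (hI (E.functor.obj A)).allEq (E.functor.map f) (E.functor.map g)
    exact E.functor.map_injective this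
  · intro B s r hsr
    set G := E.inverse
    set μ := E.unitIso.app Z with hμ
    have hGs : G.map s ≫ μ.inv ≫ μ.hom ≫ G.map r = 𝟙 (G.obj B) := by
      rw [Iso.inv_hom_id_assoc, ← G.map_comp, hsr, G.map_id]
    rcases h.2 (G.obj B) (G.map s ≫ μ.inv) (μ.hom ≫ G.map r) (by simpa using hGs) with h' | h'
    · left
      intro A
      constructor
      intro f g
      have : Subsingleton (G.obj B ⟶ G.obj A) := h' (G.obj A)
      have := this.allEq (G.map f) (G.map g)
      exact G.map_injective this
    · right
      have : μ.hom ≫ (G.map r ≫ G.map s) ≫ μ.inv = 𝟙 Z := by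
        simpa [Category.assoc] using h'
      have h2 : G.map (r ≫ s) = μ.inv ≫ μ.hom := by
        rw [G.map_comp]
        calc G.map r ≫ G.map s
            = μ.inv ≫ (μ.hom ≫ (G.map r ≫ G.map s) ≫ μ.inv) ≫ μ.hom := by
              simp [Category.assoc]
          _ = μ.inv ≫ μ.hom := by rw [this]; simp
      have h3 : G.map (r ≫ s) = G.map (𝟙 (E.functor.obj Z)) := by
        rw [h2, G.map_id]; simp; rfl
      exact G.map_injective h3

theorem master (F : C ⥤ C) [F.Full] [F.Faithful]
    (Z W O : C) (i₁ i₂ : Z ⟶ W) (δ : Z ⟶ W) (toO : ∀ A : C, A ⟶ O) (fro : ∀ A : C, O ⟶ A)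
    (hto : ∀ {A : C} (f g : A ⟶ O), f = g) (hfro : ∀ {A : C} (f g : O ⟶ A), f = g)
    (cp : ∀ {A : C}, (Z ⟶ A) → (Z ⟶ A) → (W ⟶ A))
    (cp₁ : ∀ {A : C} (x y : Z ⟶ A), i₁ ≫ cp x y = x)
    (cp₂ : ∀ {A : C} (x y : Z ⟶ A), i₂ ≫ cp x y = y)
    (cpu : ∀ {A : C} (h h' : W ⟶ A), i₁ ≫ h = i₁ ≫ h' → i₂ ≫ h = i₂ ≫ h' → h = h')
    (pm : ∀ (h h' : Z ⟶ W),
      h ≫ cp (𝟙 Z) (toO Z ≫ fro Z) = h' ≫ cp (𝟙 Z) (toO Z ≫ fro Z) →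
      h ≫ cp (toO Z ≫ fro Z) (𝟙 Z) = h' ≫ cp (toO Z ≫ fro Z) (𝟙 Z) → h = h')
    (δ₁ : δ ≫ cp (𝟙 Z) (toO Z ≫ fro Z) = 𝟙 Z)
    (δ₂ : δ ≫ cp (toO Z ≫ fro Z) (𝟙 Z) = 𝟙 Z)
    (gen : ∀ {A B : C} (g g' : A ⟶ B), (∀ x : Z ⟶ A, x ≫ g = x ≫ g') → g = g')
    (real : ∀ (A B : C) (β : (Z ⟶ A) → (Z ⟶ B)), Function.Bijective β →
      (∀ x y, β (δ ≫ cp x y) = δ ≫ cp (β x) (β y)) → ∃ ι : A ≅ B, ∀ x, β x = x ≫ ι.hom)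
    (e : Z ≅ F.obj Z) :
    Nonempty (F ≅ 𝟭 C) := by
  classical
  -- F preserves the "zero morphisms"
  have Fz : ∀ (A B : C), F.map (toO A ≫ fro B) = toO (F.obj A) ≫ fro (F.obj B) := by
    intro A B
    have cd : toO (F.obj O) ≫ fro (F.obj O) = 𝟙 (F.obj O) := by
      have h1 : toO (F.obj O) ≫ fro (F.obj O) = F.map (F.preimage (toO (F.obj O) ≫ fro (F.obj O))) :=
        (F.map_preimage _).symm
      rw [h1, hto (F.preimage (toO (F.obj O) ≫ fro (F.obj O))) (𝟙 O)]
      simp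
    calc F.map (toO A ≫ fro B) = F.map (toO A) ≫ F.map (fro B) := F.map_comp _ _
      _ = (F.map (toO A) ≫ toO (F.obj O)) ≫ (fro (F.obj O) ≫ F.map (fro B)) := by
          rw [← Category.assoc, Category.assoc (F.map (toO A)), cd]; simp
      _ = toO (F.obj A) ≫ fro (F.obj B) := by rw [hto (F.map (toO A) ≫ toO (F.obj O)) (toO (F.obj A)), hfro (fro (F.obj O) ≫ F.map (fro B)) (fro (F.obj B))]
  set z : Z ⟶ Z := toO Z ≫ fro Z with hz
  set p₁ : W ⟶ Z := cp (𝟙 Z) z with hp₁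
  set p₂ : W ⟶ Z := cp z (𝟙 Z) with hp₂
  -- the element-wise action of F through e
  set u : ∀ (A : C), (Z ⟶ A) → (Z ⟶ F.obj A) := fun A x => e.hom ≫ F.map x with hu
  have ubij : ∀ A : C, Function.Bijective (u A) := by
    intro A
    constructor
    · intro x y hxy
      simp only [hu] at hxy
      have := (Iso.cancel_iso_hom_left e _ _).mp hxy
      exact F.map_injective this
    · intro y
      refine ⟨F.preimage (e.inv ≫ y), ?_⟩
      simp [hu]
  set θ : W ⟶ F.obj W := cp (e.hom ≫ F.map i₁) (e.hom ≫ F.map i₂) with hθ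
  have claim1 : ∀ {A : C} (x y : Z ⟶ A), θ ≫ F.map (cp x y) = cp (u A x) (u A y) := by
    intro A x y
    apply cpu
    · rw [← Category.assoc, cp₁, Category.assoc, ← F.map_comp, cp₁, cp₁]
    · rw [← Category.assoc, cp₂, Category.assoc, ← F.map_comp, cp₂, cp₂]
  have ez : e.hom ≫ F.map z = z ≫ e.hom := by
    rw [hz, Fz Z Z]
    rw [← Category.assoc, hto (e.hom ≫ toO (F.obj Z)) (toO Z), Category.assoc,
      hfro (fro (F.obj Z)) (fro Z ≫ e.hom)]
  have θp₁ : θ ≫ F.map p₁ = p₁ ≫ e.hom := by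
    apply cpu
    · rw [← Category.assoc, cp₁, Category.assoc, ← F.map_comp, hp₁, cp₁, ← Category.assoc, cp₁]
      simp
    · rw [← Category.assoc, cp₂, Category.assoc, ← F.map_comp, hp₁, cp₂, ← Category.assoc, cp₂]
      exact ez
  have θp₂ : θ ≫ F.map p₂ = p₂ ≫ e.hom := by
    apply cpu
    · rw [← Category.assoc, cp₁, Category.assoc, ← F.map_comp, hp₂, cp₁, ← Category.assoc, cp₁]
      exact ez
    · rw [← Category.assoc, cp₂, Category.assoc, ← F.map_comp, hp₂, cp₂, ← Category.assoc, cp₂]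
      simp
  -- joint monomorphicity of the transported projections
  have pm' : ∀ (h h' : Z ⟶ F.obj W),
      h ≫ F.map p₁ = h' ≫ F.map p₁ → h ≫ F.map p₂ = h' ≫ F.map p₂ → h = h' := by
    intro h h' H1 H2
    have e1 : h = e.hom ≫ F.map (F.preimage (e.inv ≫ h)) := by simp
    have e2 : h' = e.hom ≫ F.map (F.preimage (e.inv ≫ h')) := by simp
    set h₀ := F.preimage (e.inv ≫ h)
    set h₀' := F.preimage (e.inv ≫ h')
    have key : ∀ (q : W ⟶ Z), h ≫ F.map q = h' ≫ F.map q → h₀ ≫ q = h₀' ≫ q := by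
      intro q hq
      apply F.map_injective
      rw [F.map_comp, F.map_comp]
      have : e.hom ≫ F.map h₀ ≫ F.map q = e.hom ≫ F.map h₀' ≫ F.map q := by
        rw [← Category.assoc, ← e1, ← Category.assoc, ← e2]; exact hq
      exact (Iso.cancel_iso_hom_left e _ _).mp this
    have := pm h₀ h₀' (key p₁ H1) (key p₂ H2)
    rw [e1, e2, this]
  have claim2 : e.hom ≫ F.map δ = δ ≫ θ := by
    apply pm'
    · rw [Category.assoc, ← F.map_comp, δ₁, Category.assoc, θp₁, ← Category.assoc, δ₁]
      simp
    · rw [Category.assoc, ← F.map_comp, δ₂, Category.assoc, θp₂, ← Category.assoc, δ₂]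
      simp
  have uadd : ∀ {A : C} (x y : Z ⟶ A), u A (δ ≫ cp x y) = δ ≫ cp (u A x) (u A y) := by
    intro A x y
    simp only [hu]
    rw [F.map_comp, ← Category.assoc, claim2, Category.assoc, claim1]
  -- realize the iso on each object
  have comp : ∀ A : C, ∃ ι : A ≅ F.obj A, ∀ x : Z ⟶ A, u A x = x ≫ ι.hom := by
    intro A
    exact real A (F.obj A) (u A) (ubij A) (fun x y => uadd x y)
  choose ι hι using comp
  have nat : ∀ {A B : C} (f : A ⟶ B), (ι A).hom ≫ F.map f = f ≫ (ι B).hom := by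
    intro A B f
    apply gen
    intro x
    rw [← Category.assoc, ← hι A x, hu]
    show (e.hom ≫ F.map x) ≫ F.map f = x ≫ f ≫ (ι B).hom
    rw [Category.assoc, ← F.map_comp]
    have h5 := hι B (x ≫ f)
    rw [hu] at h5
    simpa [Category.assoc] using h5
  refine ⟨NatIso.ofComponents (fun A => (ι A).symm) ?_⟩
  intro A B f
  simp only [Functor.id_map, Iso.symm_hom]
  calc F.map f ≫ (ι B).inv = (ι A).inv ≫ ((ι A).hom ≫ F.map f) ≫ (ι B).inv := by simp
    _ = (ι A).inv ≫ (f ≫ (ι B).hom) ≫ (ι B).inv := by rw [nat f]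
    _ = (ι A).inv ≫ f := by simp

end Master


/-- The category of finitely generated free abelian groups: the full subcategory of
abelian groups whose objects are the finitely generated free `ℤ`-modules. -/
def FAb : Type 1 :=
  ObjectProperty.FullSubcategory (fun A : AddCommGrpCat.{0} => Module.Finite ℤ A ∧ Module.Free ℤ A)

instance : Category FAb := ObjectProperty.FullSubcategory.category _

namespace FAb

@[reducible] def std (n : ℕ) : FAb :=
  ⟨AddCommGrpCat.of (Fin n → ℤ), (inferInstance : Module.Finite ℤ (Fin n → ℤ)),
    (inferInstance : Module.Free ℤ (Fin n → ℤ))⟩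

def hm {A B : FAb} (f : A.obj →+ B.obj) : A ⟶ B := ⟨AddCommGrpCat.ofHom f⟩

def toAdd {A B : FAb} (f : A ⟶ B) : A.obj →+ B.obj := f.hom.hom

def ap {A B : FAb} (f : A ⟶ B) : A.obj → B.obj := toAdd f

@[simp] lemma ap_hm {A B : FAb} (f : A.obj →+ B.obj) (a : A.obj) : ap (hm f) a = f a := rfl

@[simp] lemma ap_comp {A B C : FAb} (f : A ⟶ B) (g : B ⟶ C) (a : A.obj) :
    ap (f ≫ g) a = ap g (ap f a) := rfl

@[simp] lemma ap_id {A : FAb} (a : A.obj) : ap (𝟙 A) a = a := rfl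

lemma ap_add {A B : FAb} (f : A ⟶ B) (x y : A.obj) : ap f (x + y) = ap f x + ap f y :=
  map_add (toAdd f) x y

lemma ap_zsmul {A B : FAb} (f : A ⟶ B) (c : ℤ) (x : A.obj) : ap f (c • x) = c • ap f x :=
  map_zsmul (toAdd f) c x

lemma ap_zero {A B : FAb} (f : A ⟶ B) : ap f 0 = 0 := map_zero (toAdd f)

lemma hom_ext {A B : FAb} (f g : A ⟶ B) (h : ∀ a, ap f a = ap g a) : f = g :=
  InducedCategory.hom_ext (AddCommGrpCat.hom_ext (AddMonoidHom.ext h))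

/-- The standard generator of `std 1`. -/
def one : (std 1).obj := fun _ => (1 : ℤ)

@[simp] lemma smul_app {k : ℕ} (c : ℤ) (w : (std k).obj) (i : Fin k) :
    (c • w) i = c * w i := by
  have h1 : (c • w) i = c • (w i) := rfl
  rw [h1, smul_eq_mul]

@[simp] lemma add_app {k : ℕ} (w w' : (std k).obj) (i : Fin k) :
    (w + w') i = w i + w' i := rfl

@[simp] lemma one_app (i : Fin 1) : one i = 1 := rfl

@[simp] lemma zero_app {k : ℕ} (i : Fin k) : (0 : (std k).obj) i = 0 := rfl

/-- rank-one elements: the hom out of `std 1` with value `a`. -/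
def el {A : FAb} (a : A.obj) : std 1 ⟶ A :=
  hm ((zmultiplesHom A.obj a).comp (Pi.evalAddMonoidHom (fun _ : Fin 1 => ℤ) 0))

@[simp] lemma el_ap {A : FAb} (a : A.obj) : ap (el a) one = a := by
  show (zmultiplesHom A.obj a).comp (Pi.evalAddMonoidHom (fun _ : Fin 1 => ℤ) 0) one = a
  exact one_zsmul a

lemma eq_smul_one (v : (std 1).obj) : v = v 0 • one := by
  funext i
  have : i = 0 := Subsingleton.elim _ _
  subst this
  rw [smul_app, one_app, mul_one]

lemma homZ_ext {A : FAb} (f g : std 1 ⟶ A) (h : ap f one = ap g one) : f = g := by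
  apply hom_ext
  intro v
  rw [eq_smul_one v, ap_zsmul, ap_zsmul, h]

lemma el_eq {A : FAb} (x : std 1 ⟶ A) : el (ap x one) = x :=
  homZ_ext _ _ (by simp)

def cp {A : FAb} (x y : std 1 ⟶ A) : std 2 ⟶ A :=
  hm ((zmultiplesHom A.obj (ap x one)).comp (Pi.evalAddMonoidHom (fun _ : Fin 2 => ℤ) 0) +
      (zmultiplesHom A.obj (ap y one)).comp (Pi.evalAddMonoidHom (fun _ : Fin 2 => ℤ) 1))

@[simp] lemma cp_ap {A : FAb} (x y : std 1 ⟶ A) (v : (std 2).obj) :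
    ap (cp x y) v = v 0 • ap x one + v 1 • ap y one := rfl

def i₁ : std 1 ⟶ std 2 := el (Pi.single 0 1)
def i₂ : std 1 ⟶ std 2 := el (Pi.single 1 1)
def dg : std 1 ⟶ std 2 := el (fun _ => 1)

@[simp] lemma dg_ap : ap dg one = fun _ => (1 : ℤ) := el_ap _
def toO (A : FAb) : A ⟶ std 0 := hm 0
def fro (A : FAb) : std 0 ⟶ A := hm 0

lemma hto {A : FAb} (f g : A ⟶ std 0) : f = g := by
  apply hom_ext
  intro a
  exact Subsingleton.elim (α := Fin 0 → ℤ) _ _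

lemma hfro {A : FAb} (f g : std 0 ⟶ A) : f = g := by
  apply hom_ext
  intro a
  have : a = 0 := Subsingleton.elim (α := Fin 0 → ℤ) _ _
  rw [this, ap_zero, ap_zero]

@[simp] lemma ap_toO {A : FAb} (a : A.obj) : ap (toO A) a = 0 := rfl

@[simp] lemma ap_zero' {A B : FAb} (f : A ⟶ B) : ap f 0 = 0 := ap_zero f

lemma z_ap {A B : FAb} (a : A.obj) : ap (toO A ≫ fro B) a = 0 := by
  rw [ap_comp, ap_toO, ap_zero]

lemma cp₁ {A : FAb} (x y : std 1 ⟶ A) : i₁ ≫ cp x y = x := by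
  apply homZ_ext
  simp [i₁]

lemma cp₂ {A : FAb} (x y : std 1 ⟶ A) : i₂ ≫ cp x y = y := by
  apply homZ_ext
  simp [i₂]

lemma eq_smul_two (v : (std 2).obj) :
    v = v 0 • (Pi.single (0 : Fin 2) (1:ℤ)) + v 1 • (Pi.single (1 : Fin 2) (1:ℤ)) := by
  funext i
  rw [add_app, smul_app, smul_app, Pi.single_apply, Pi.single_apply]
  fin_cases i <;> simp

lemma cpu {A : FAb} (h h' : std 2 ⟶ A) (h1 : i₁ ≫ h = i₁ ≫ h') (h2 : i₂ ≫ h = i₂ ≫ h') :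
    h = h' := by
  have e1 : ap h (Pi.single 0 1) = ap h' (Pi.single 0 1) := by
    have := congrArg (fun f : _ ⟶ _ => ap f one) h1
    simpa [i₁] using this
  have e2 : ap h (Pi.single 1 1) = ap h' (Pi.single 1 1) := by
    have := congrArg (fun f : _ ⟶ _ => ap f one) h2
    simpa [i₂] using this
  apply hom_ext
  intro v
  rw [eq_smul_two v, ap_add, ap_add]
  erw [ap_zsmul, ap_zsmul, ap_zsmul, ap_zsmul]
  rw [e1, e2]

lemma p₁_ap (v : (std 2).obj) :
    ap (cp (𝟙 (std 1)) (toO (std 1) ≫ fro (std 1))) v = v 0 • one := by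
  rw [cp_ap, ap_id, z_ap, smul_zero, add_zero]

lemma p₂_ap (v : (std 2).obj) :
    ap (cp (toO (std 1) ≫ fro (std 1)) (𝟙 (std 1))) v = v 1 • one := by
  rw [cp_ap, ap_id, z_ap, smul_zero, zero_add]

lemma pm (h h' : std 1 ⟶ std 2)
    (H1 : h ≫ cp (𝟙 (std 1)) (toO (std 1) ≫ fro (std 1)) =
      h' ≫ cp (𝟙 (std 1)) (toO (std 1) ≫ fro (std 1)))
    (H2 : h ≫ cp (toO (std 1) ≫ fro (std 1)) (𝟙 (std 1)) =
      h' ≫ cp (toO (std 1) ≫ fro (std 1)) (𝟙 (std 1))) : h = h' := by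
  have e1 : (ap h one) 0 • one = (ap h' one) 0 • one := by
    have h5 := congrArg (fun f : _ ⟶ _ => ap f one) H1
    simp only [ap_comp] at h5
    rw [p₁_ap, p₁_ap] at h5
    exact h5
  have e2 : (ap h one) 1 • one = (ap h' one) 1 • one := by
    have h5 := congrArg (fun f : _ ⟶ _ => ap f one) H2
    simp only [ap_comp] at h5
    rw [p₂_ap, p₂_ap] at h5
    exact h5
  have c1 : (ap h one) 0 = (ap h' one) 0 := by
    have h6 : ((ap h one) 0 • one) 0 = ((ap h' one) 0 • one) 0 := congrFun e1 0
    simpa using h6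
  have c2 : (ap h one) 1 = (ap h' one) 1 := by
    have h6 : ((ap h one) 1 • one) 0 = ((ap h' one) 1 • one) 0 := congrFun e2 0
    simpa using h6
  apply homZ_ext
  funext i
  fin_cases i
  · exact c1
  · exact c2

lemma δ₁ : dg ≫ cp (𝟙 (std 1)) (toO (std 1) ≫ fro (std 1)) = 𝟙 (std 1) := by
  apply homZ_ext
  rw [ap_comp, p₁_ap, ap_id, dg_ap]
  funext i
  rw [smul_app, one_app, one_mul]

lemma δ₂ : dg ≫ cp (toO (std 1) ≫ fro (std 1)) (𝟙 (std 1)) = 𝟙 (std 1) := by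
  apply homZ_ext
  rw [ap_comp, p₂_ap, ap_id, dg_ap]
  funext i
  rw [smul_app, one_app, one_mul]

lemma gen {A B : FAb} (g g' : A ⟶ B) (h : ∀ x : std 1 ⟶ A, x ≫ g = x ≫ g') : g = g' := by
  apply hom_ext
  intro a
  have := congrArg (fun f : _ ⟶ _ => ap f one) (h (el a))
  simpa using this

lemma plus_eq {A : FAb} (x y : std 1 ⟶ A) : dg ≫ cp x y = el (ap x one + ap y one) := by
  apply homZ_ext
  simp [dg]

def isoOfAddEquiv {A B : FAb} (E : A.obj ≃+ B.obj) : A ≅ B where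
  hom := hm E.toAddMonoidHom
  inv := hm E.symm.toAddMonoidHom
  hom_inv_id := hom_ext _ _ (by simp)
  inv_hom_id := hom_ext _ _ (by simp)

lemma real (A B : FAb) (β : (std 1 ⟶ A) → (std 1 ⟶ B)) (hb : Function.Bijective β)
    (hadd : ∀ x y, β (dg ≫ cp x y) = dg ≫ cp (β x) (β y)) :
    ∃ ι : A ≅ B, ∀ x, β x = x ≫ ι.hom := by
  set b : A.obj → B.obj := fun a => ap (β (el a)) one with hbdef
  have badd : ∀ a a', b (a + a') = b a + b a' := by
    intro a a'
    have h1 : el (a + a') = dg ≫ cp (el a) (el a') := by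
      rw [plus_eq]
      congr 1 <;> simp
    have h2 := hadd (el a) (el a')
    rw [← h1] at h2
    rw [hbdef]
    simp only
    rw [h2, plus_eq]
    simp
  have bbij : Function.Bijective b := by
    constructor
    · intro a a' h
      have : β (el a) = β (el a') := homZ_ext _ _ h
      have := hb.1 this
      have := congrArg (fun f : _ ⟶ _ => ap f one) this
      simpa using this
    · intro bb
      obtain ⟨x, hx⟩ := hb.2 (el bb)
      refine ⟨ap x one, ?_⟩
      rw [hbdef]
      simp only
      rw [el_eq x, hx]
      simp
  set E : A.obj ≃+ B.obj := AddEquiv.mk' (Equiv.ofBijective b bbij) badd with hE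
  refine ⟨isoOfAddEquiv E, ?_⟩
  intro x
  apply homZ_ext
  have : ap (x ≫ (isoOfAddEquiv E).hom) one = b (ap x one) := by
    simp [isoOfAddEquiv, hE]
    rfl
  rw [this, hbdef]
  simp only
  rw [el_eq x]

lemma notIniZ : ¬ Ini (std 1) := by
  intro h
  have := (h (std 1)).allEq (𝟙 (std 1)) (toO (std 1) ≫ fro (std 1))
  have := congrArg (fun f : std 1 ⟶ std 1 => (ap f one) 0) this
  simpa [one] using this

lemma pone : Pone (std 1) := by
  constructor
  · exact notIniZ
  · intro B s r hsr
    set c : ℤ := ap (r ≫ s) one 0 with hc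
    have hq : ap (r ≫ s) one = c • one := by
      rw [hc]
      exact eq_smul_one _
    have idem : (r ≫ s) ≫ (r ≫ s) = r ≫ s := by
      calc (r ≫ s) ≫ r ≫ s = r ≫ (s ≫ r) ≫ s := by simp [Category.assoc]
        _ = r ≫ s := by rw [hsr]; simp
    have hcc : c * c = c := by
      have h8 : ap (r ≫ s) (ap (r ≫ s) one) = ap (r ≫ s) one :=
        congrArg (fun f : std 1 ⟶ std 1 => ap f one) idem
      rw [hq, ap_zsmul, hq] at h8
      have h9 := congrFun h8 0
      rw [smul_app, smul_app, one_app] at h9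
      simpa using h9
    have hc01 : c = 0 ∨ c = 1 := by
      have h3 : c * (c - 1) = 0 := by rw [mul_sub, hcc, mul_one, sub_self]
      rcases mul_eq_zero.mp h3 with h | h
      · exact Or.inl h
      · right; omega
    rcases hc01 with h | h
    · left
      -- s is the zero map, so B is trivial
      have hq0 : ap (r ≫ s) one = 0 := by rw [hq, h]; simp
      have hs0 : ∀ bb : B.obj, ap s bb = 0 := by
        intro bb
        have h4 : s = s ≫ r ≫ s := by rw [← Category.assoc, hsr]; simp
        have := congrArg (fun f => ap f bb) h4
        simp only [ap_comp] at this
        rw [this]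
        have h5 : ap (r ≫ s) (ap s bb) = 0 := by
          have h6 : ap s bb = (ap s bb) 0 • one := eq_smul_one _
          rw [h6, ap_zsmul, hq0]
          simp
        exact h5
      have hb0 : ∀ bb : B.obj, bb = 0 := by
        intro bb
        have := congrArg (fun f => ap f bb) hsr
        simp only [ap_comp, ap_id] at this
        rw [← this, hs0, ap_zero]
      intro A
      constructor
      intro f g
      apply hom_ext
      intro a
      rw [hb0 a, ap_zero, ap_zero]
    · right
      apply homZ_ext
      rw [hq, h]
      simp

lemma classify (X : FAb) : ∃ n : ℕ, Nonempty (X.obj ≃+ (Fin n → ℤ)) := by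
  obtain ⟨hfin, hfree⟩ := X.property
  let ι := Module.Free.ChooseBasisIndex ℤ X.obj
  let bX : Module.Basis ι ℤ X.obj := Module.Free.chooseBasis ℤ X.obj
  refine ⟨Fintype.card ι, ⟨?_⟩⟩
  exact ((bX.reindex (Fintype.equivFin ι)).equivFun).toAddEquiv

lemma iniO (X : FAb) (h : Nonempty (X.obj ≃+ (Fin 0 → ℤ))) : Ini X := by
  obtain ⟨eq⟩ := h
  intro A
  constructor
  intro f g
  apply hom_ext
  intro a
  have : a = 0 := by
    have h1 : eq a = eq 0 := Subsingleton.elim (α := Fin 0 → ℤ) _ _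
    have h2 := eq.injective h1
    simpa using h2
  rw [this, ap_zero, ap_zero]

lemma pone_refute (n : ℕ) (h : Pone (std n)) : n = 1 := by
  match n with
  | 0 =>
    exfalso
    apply h.1
    exact iniO (std 0) ⟨AddEquiv.refl _⟩
  | 1 => rfl
  | (m+2) =>
    exfalso
    -- split mono std 1 → std (m+2)
    set s : std 1 ⟶ std (m+2) := el (Pi.single 0 1) with hs
    set r : std (m+2) ⟶ std 1 :=
      hm ((zmultiplesHom (std 1).obj one).comp
        (Pi.evalAddMonoidHom (fun _ : Fin (m+2) => ℤ) 0)) with hr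
    have hsr : s ≫ r = 𝟙 (std 1) := by
      apply homZ_ext
      rw [ap_comp, ap_id]
      have h1 : ap s one = Pi.single 0 1 := el_ap _
      rw [h1]
      have h2 : ap r (Pi.single 0 1) = (Pi.single (0 : Fin (m+2)) (1 : ℤ) : Fin (m+2) → ℤ) 0 • one := by
        rw [hr]; rfl
      rw [h2, Pi.single_eq_same]
      funext i
      rw [smul_app, one_app, one_mul]
    rcases h.2 (std 1) s r hsr with h' | h'
    · exact notIniZ h'
    · -- r ≫ s = 𝟙 is false: evaluate at Pi.single 1 1
      have := congrArg
        (fun f : std (m+2) ⟶ std (m+2) => ap f (Pi.single (1 : Fin (m+2)) (1:ℤ)) 1) h'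
      simp only [ap_comp, ap_id] at this
      have hne : (0 : Fin (m+2)) ≠ (1 : Fin (m+2)) := by
        intro hh
        have := congrArg Fin.val hh
        simp at this
      have hr1 : ap r (Pi.single (1 : Fin (m+2)) (1:ℤ)) = 0 := by
        have h2 : ap r (Pi.single (1 : Fin (m+2)) (1:ℤ))
            = (Pi.single (1 : Fin (m+2)) (1 : ℤ) : Fin (m+2) → ℤ) 0 • one := by
          rw [hr]; rfl
        rw [h2, Pi.single_eq_of_ne hne]
        funext i
        rw [smul_app, zero_mul, zero_app]
      rw [hr1, ap_zero] at this
      simp [Pi.single_eq_same] at this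

theorem inner (φ : Aut (Cat.of FAb)) : Nonempty ((φ.hom.toFunctor : FAb ⥤ FAb) ≅ 𝟭 FAb) := by
  let E : FAb ≌ FAb := Cat.equivOfIso φ
  let F : FAb ⥤ FAb := φ.hom.toFunctor
  haveI : F.IsEquivalence := E.isEquivalence_functor
  have hp : Pone (F.obj (std 1)) := (pone).transfer E
  obtain ⟨n, ⟨eqn⟩⟩ := classify (F.obj (std 1))
  have hiso : F.obj (std 1) ≅ std n := isoOfAddEquiv eqn
  have hn : n = 1 := pone_refute n (hp.of_iso hiso)
  subst hn
  have e : std 1 ≅ F.obj (std 1) := hiso.symm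
  exact master F (std 1) (std 2) (std 0) i₁ i₂ dg toO fro
    (fun f g => hto f g) (fun f g => hfro f g) (fun x y => cp x y)
    (fun x y => cp₁ x y) (fun x y => cp₂ x y) (fun h h' => cpu h h')
    pm δ₁ δ₂ (fun g g' => gen g g') real e

end FAb

/-- The category of finitely generated free commutative monoids: the full subcategory of
(additive) commutative monoids whose objects are the monoids isomorphic to `ℕ^n` for
some `n ∈ ℕ`. -/
def FCM : Type 1 :=
  ObjectProperty.FullSubcategory (fun A : AddCommMonCat.{0} => ∃ n : ℕ, Nonempty (A ≃+ (Fin n → ℕ)))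

instance : Category FCM := ObjectProperty.FullSubcategory.category _

namespace FCM

@[reducible] def std (n : ℕ) : FCM :=
  ⟨AddCommMonCat.of (Fin n → ℕ), n, ⟨AddEquiv.refl _⟩⟩

def hm {A B : FCM} (f : A.obj →+ B.obj) : A ⟶ B := ⟨AddCommMonCat.ofHom f⟩

def toAdd {A B : FCM} (f : A ⟶ B) : A.obj →+ B.obj := f.hom.hom

def ap {A B : FCM} (f : A ⟶ B) : A.obj → B.obj := toAdd f

@[simp] lemma ap_hm {A B : FCM} (f : A.obj →+ B.obj) (a : A.obj) : ap (hm f) a = f a := rfl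

@[simp] lemma ap_comp {A B C : FCM} (f : A ⟶ B) (g : B ⟶ C) (a : A.obj) :
    ap (f ≫ g) a = ap g (ap f a) := rfl

@[simp] lemma ap_id {A : FCM} (a : A.obj) : ap (𝟙 A) a = a := rfl

lemma ap_add {A B : FCM} (f : A ⟶ B) (x y : A.obj) : ap f (x + y) = ap f x + ap f y :=
  map_add (toAdd f) x y

lemma ap_zsmul {A B : FCM} (f : A ⟶ B) (c : ℕ) (x : A.obj) : ap f (c • x) = c • ap f x :=
  AddMonoidHom.map_nsmul (toAdd f) c x

lemma ap_zero {A B : FCM} (f : A ⟶ B) : ap f 0 = 0 := map_zero (toAdd f)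

lemma hom_ext {A B : FCM} (f g : A ⟶ B) (h : ∀ a, ap f a = ap g a) : f = g :=
  InducedCategory.hom_ext (AddCommMonCat.hom_ext (AddMonoidHom.ext h))

/-- The standard generator of `std 1`. -/
def one : (std 1).obj := fun _ => (1 : ℕ)

@[simp] lemma smul_app {k : ℕ} (c : ℕ) (w : (std k).obj) (i : Fin k) :
    (c • w) i = c * w i := by
  have h1 : (c • w) i = c • (w i) := rfl
  rw [h1, nsmul_eq_mul, Nat.cast_id]

@[simp] lemma add_app {k : ℕ} (w w' : (std k).obj) (i : Fin k) :
    (w + w') i = w i + w' i := rfl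

@[simp] lemma one_app (i : Fin 1) : one i = 1 := rfl

@[simp] lemma zero_app {k : ℕ} (i : Fin k) : (0 : (std k).obj) i = 0 := rfl

/-- rank-one elements: the hom out of `std 1` with value `a`. -/
def el {A : FCM} (a : A.obj) : std 1 ⟶ A :=
  hm ((multiplesHom A.obj a).comp (Pi.evalAddMonoidHom (fun _ : Fin 1 => ℕ) 0))

@[simp] lemma el_ap {A : FCM} (a : A.obj) : ap (el a) one = a := by
  show (multiplesHom A.obj a).comp (Pi.evalAddMonoidHom (fun _ : Fin 1 => ℕ) 0) one = a
  exact one_nsmul a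

lemma eq_smul_one (v : (std 1).obj) : v = v 0 • one := by
  funext i
  have : i = 0 := Subsingleton.elim _ _
  subst this
  rw [smul_app, one_app, mul_one]

lemma homZ_ext {A : FCM} (f g : std 1 ⟶ A) (h : ap f one = ap g one) : f = g := by
  apply hom_ext
  intro v
  rw [eq_smul_one v, ap_zsmul, ap_zsmul, h]

lemma el_eq {A : FCM} (x : std 1 ⟶ A) : el (ap x one) = x :=
  homZ_ext _ _ (by simp)

def cp {A : FCM} (x y : std 1 ⟶ A) : std 2 ⟶ A :=
  hm ((multiplesHom A.obj (ap x one)).comp (Pi.evalAddMonoidHom (fun _ : Fin 2 => ℕ) 0) +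
      (multiplesHom A.obj (ap y one)).comp (Pi.evalAddMonoidHom (fun _ : Fin 2 => ℕ) 1))

@[simp] lemma cp_ap {A : FCM} (x y : std 1 ⟶ A) (v : (std 2).obj) :
    ap (cp x y) v = v 0 • ap x one + v 1 • ap y one := rfl

def i₁ : std 1 ⟶ std 2 := el (Pi.single 0 1)
def i₂ : std 1 ⟶ std 2 := el (Pi.single 1 1)
def dg : std 1 ⟶ std 2 := el (fun _ => 1)

@[simp] lemma dg_ap : ap dg one = fun _ => (1 : ℕ) := el_ap _
def toO (A : FCM) : A ⟶ std 0 := hm 0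
def fro (A : FCM) : std 0 ⟶ A := hm 0

lemma hto {A : FCM} (f g : A ⟶ std 0) : f = g := by
  apply hom_ext
  intro a
  exact Subsingleton.elim (α := Fin 0 → ℕ) _ _

lemma hfro {A : FCM} (f g : std 0 ⟶ A) : f = g := by
  apply hom_ext
  intro a
  have : a = 0 := Subsingleton.elim (α := Fin 0 → ℕ) _ _
  rw [this, ap_zero, ap_zero]

@[simp] lemma ap_toO {A : FCM} (a : A.obj) : ap (toO A) a = 0 := rfl

@[simp] lemma ap_zero' {A B : FCM} (f : A ⟶ B) : ap f 0 = 0 := ap_zero f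

lemma z_ap {A B : FCM} (a : A.obj) : ap (toO A ≫ fro B) a = 0 := by
  rw [ap_comp, ap_toO, ap_zero]

lemma cp₁ {A : FCM} (x y : std 1 ⟶ A) : i₁ ≫ cp x y = x := by
  apply homZ_ext
  simp [i₁]

lemma cp₂ {A : FCM} (x y : std 1 ⟶ A) : i₂ ≫ cp x y = y := by
  apply homZ_ext
  simp [i₂]

lemma eq_smul_two (v : (std 2).obj) :
    v = v 0 • (Pi.single (0 : Fin 2) (1:ℕ)) + v 1 • (Pi.single (1 : Fin 2) (1:ℕ)) := by
  funext i
  rw [add_app, smul_app, smul_app, Pi.single_apply, Pi.single_apply]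
  fin_cases i <;> simp

lemma cpu {A : FCM} (h h' : std 2 ⟶ A) (h1 : i₁ ≫ h = i₁ ≫ h') (h2 : i₂ ≫ h = i₂ ≫ h') :
    h = h' := by
  have e1 : ap h (Pi.single 0 1) = ap h' (Pi.single 0 1) := by
    have := congrArg (fun f : _ ⟶ _ => ap f one) h1
    simpa [i₁] using this
  have e2 : ap h (Pi.single 1 1) = ap h' (Pi.single 1 1) := by
    have := congrArg (fun f : _ ⟶ _ => ap f one) h2
    simpa [i₂] using this
  apply hom_ext
  intro v
  rw [eq_smul_two v, ap_add, ap_add]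
  erw [ap_zsmul, ap_zsmul, ap_zsmul, ap_zsmul]
  rw [e1, e2]

lemma p₁_ap (v : (std 2).obj) :
    ap (cp (𝟙 (std 1)) (toO (std 1) ≫ fro (std 1))) v = v 0 • one := by
  rw [cp_ap, ap_id, z_ap, smul_zero, add_zero]

lemma p₂_ap (v : (std 2).obj) :
    ap (cp (toO (std 1) ≫ fro (std 1)) (𝟙 (std 1))) v = v 1 • one := by
  rw [cp_ap, ap_id, z_ap, smul_zero, zero_add]

lemma pm (h h' : std 1 ⟶ std 2)
    (H1 : h ≫ cp (𝟙 (std 1)) (toO (std 1) ≫ fro (std 1)) =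
      h' ≫ cp (𝟙 (std 1)) (toO (std 1) ≫ fro (std 1)))
    (H2 : h ≫ cp (toO (std 1) ≫ fro (std 1)) (𝟙 (std 1)) =
      h' ≫ cp (toO (std 1) ≫ fro (std 1)) (𝟙 (std 1))) : h = h' := by
  have e1 : (ap h one) 0 • one = (ap h' one) 0 • one := by
    have h5 := congrArg (fun f : _ ⟶ _ => ap f one) H1
    simp only [ap_comp] at h5
    rw [p₁_ap, p₁_ap] at h5
    exact h5
  have e2 : (ap h one) 1 • one = (ap h' one) 1 • one := by
    have h5 := congrArg (fun f : _ ⟶ _ => ap f one) H2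
    simp only [ap_comp] at h5
    rw [p₂_ap, p₂_ap] at h5
    exact h5
  have c1 : (ap h one) 0 = (ap h' one) 0 := by
    have h6 : ((ap h one) 0 • one) 0 = ((ap h' one) 0 • one) 0 := congrFun e1 0
    simpa using h6
  have c2 : (ap h one) 1 = (ap h' one) 1 := by
    have h6 : ((ap h one) 1 • one) 0 = ((ap h' one) 1 • one) 0 := congrFun e2 0
    simpa using h6
  apply homZ_ext
  funext i
  fin_cases i
  · exact c1
  · exact c2

lemma δ₁ : dg ≫ cp (𝟙 (std 1)) (toO (std 1) ≫ fro (std 1)) = 𝟙 (std 1) := by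
  apply homZ_ext
  rw [ap_comp, p₁_ap, ap_id, dg_ap]
  funext i
  rw [smul_app, one_app, one_mul]

lemma δ₂ : dg ≫ cp (toO (std 1) ≫ fro (std 1)) (𝟙 (std 1)) = 𝟙 (std 1) := by
  apply homZ_ext
  rw [ap_comp, p₂_ap, ap_id, dg_ap]
  funext i
  rw [smul_app, one_app, one_mul]

lemma gen {A B : FCM} (g g' : A ⟶ B) (h : ∀ x : std 1 ⟶ A, x ≫ g = x ≫ g') : g = g' := by
  apply hom_ext
  intro a
  have := congrArg (fun f : _ ⟶ _ => ap f one) (h (el a))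
  simpa using this

lemma plus_eq {A : FCM} (x y : std 1 ⟶ A) : dg ≫ cp x y = el (ap x one + ap y one) := by
  apply homZ_ext
  simp [dg]

def isoOfAddEquiv {A B : FCM} (E : A.obj ≃+ B.obj) : A ≅ B where
  hom := hm E.toAddMonoidHom
  inv := hm E.symm.toAddMonoidHom
  hom_inv_id := hom_ext _ _ (by simp)
  inv_hom_id := hom_ext _ _ (by simp)

lemma real (A B : FCM) (β : (std 1 ⟶ A) → (std 1 ⟶ B)) (hb : Function.Bijective β)
    (hadd : ∀ x y, β (dg ≫ cp x y) = dg ≫ cp (β x) (β y)) :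
    ∃ ι : A ≅ B, ∀ x, β x = x ≫ ι.hom := by
  set b : A.obj → B.obj := fun a => ap (β (el a)) one with hbdef
  have badd : ∀ a a', b (a + a') = b a + b a' := by
    intro a a'
    have h1 : el (a + a') = dg ≫ cp (el a) (el a') := by
      rw [plus_eq]
      congr 1 <;> simp
    have h2 := hadd (el a) (el a')
    rw [← h1] at h2
    rw [hbdef]
    simp only
    rw [h2, plus_eq]
    simp
  have bbij : Function.Bijective b := by
    constructor
    · intro a a' h
      have : β (el a) = β (el a') := homZ_ext _ _ h
      have := hb.1 this
      have := congrArg (fun f : _ ⟶ _ => ap f one) this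
      simpa using this
    · intro bb
      obtain ⟨x, hx⟩ := hb.2 (el bb)
      refine ⟨ap x one, ?_⟩
      rw [hbdef]
      simp only
      rw [el_eq x, hx]
      simp
  set E : A.obj ≃+ B.obj := AddEquiv.mk' (Equiv.ofBijective b bbij) badd with hE
  refine ⟨isoOfAddEquiv E, ?_⟩
  intro x
  apply homZ_ext
  have : ap (x ≫ (isoOfAddEquiv E).hom) one = b (ap x one) := by
    simp [isoOfAddEquiv, hE]
    rfl
  rw [this, hbdef]
  simp only
  rw [el_eq x]

lemma notIniZ : ¬ Ini (std 1) := by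
  intro h
  have := (h (std 1)).allEq (𝟙 (std 1)) (toO (std 1) ≫ fro (std 1))
  have := congrArg (fun f : std 1 ⟶ std 1 => (ap f one) 0) this
  simpa [one] using this

lemma pone : Pone (std 1) := by
  constructor
  · exact notIniZ
  · intro B s r hsr
    set c : ℕ := ap (r ≫ s) one 0 with hc
    have hq : ap (r ≫ s) one = c • one := by
      rw [hc]
      exact eq_smul_one _
    have idem : (r ≫ s) ≫ (r ≫ s) = r ≫ s := by
      calc (r ≫ s) ≫ r ≫ s = r ≫ (s ≫ r) ≫ s := by simp [Category.assoc]
        _ = r ≫ s := by rw [hsr]; simp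
    have hcc : c * c = c := by
      have h8 : ap (r ≫ s) (ap (r ≫ s) one) = ap (r ≫ s) one :=
        congrArg (fun f : std 1 ⟶ std 1 => ap f one) idem
      rw [hq, ap_zsmul, hq] at h8
      have h9 := congrFun h8 0
      rw [smul_app, smul_app, one_app] at h9
      simpa using h9
    have hc01 : c = 0 ∨ c = 1 := by
      rcases Nat.eq_zero_or_pos c with h | h
      · exact Or.inl h
      · right
        have := hcc.trans (mul_one c).symm
        exact Nat.eq_of_mul_eq_mul_left h this
    rcases hc01 with h | h
    · left
      -- s is the zero map, so B is trivial
      have hq0 : ap (r ≫ s) one = 0 := by rw [hq, h]; simp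
      have hs0 : ∀ bb : B.obj, ap s bb = 0 := by
        intro bb
        have h4 : s = s ≫ r ≫ s := by rw [← Category.assoc, hsr]; simp
        have := congrArg (fun f => ap f bb) h4
        simp only [ap_comp] at this
        rw [this]
        have h5 : ap (r ≫ s) (ap s bb) = 0 := by
          have h6 : ap s bb = (ap s bb) 0 • one := eq_smul_one _
          rw [h6, ap_zsmul, hq0]
          simp
        exact h5
      have hb0 : ∀ bb : B.obj, bb = 0 := by
        intro bb
        have := congrArg (fun f => ap f bb) hsr
        simp only [ap_comp, ap_id] at this
        rw [← this, hs0, ap_zero]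
      intro A
      constructor
      intro f g
      apply hom_ext
      intro a
      rw [hb0 a, ap_zero, ap_zero]
    · right
      apply homZ_ext
      rw [hq, h]
      simp

lemma classify (X : FCM) : ∃ n : ℕ, Nonempty (X.obj ≃+ (Fin n → ℕ)) := X.property

lemma iniO (X : FCM) (h : Nonempty (X.obj ≃+ (Fin 0 → ℕ))) : Ini X := by
  obtain ⟨eq⟩ := h
  intro A
  constructor
  intro f g
  apply hom_ext
  intro a
  have : a = 0 := by
    have h1 : eq a = eq 0 := Subsingleton.elim (α := Fin 0 → ℕ) _ _
    have h2 := eq.injective h1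
    simpa using h2
  rw [this, ap_zero, ap_zero]

lemma pone_refute (n : ℕ) (h : Pone (std n)) : n = 1 := by
  match n with
  | 0 =>
    exfalso
    apply h.1
    exact iniO (std 0) ⟨AddEquiv.refl _⟩
  | 1 => rfl
  | (m+2) =>
    exfalso
    -- split mono std 1 → std (m+2)
    set s : std 1 ⟶ std (m+2) := el (Pi.single 0 1) with hs
    set r : std (m+2) ⟶ std 1 :=
      hm ((multiplesHom (std 1).obj one).comp
        (Pi.evalAddMonoidHom (fun _ : Fin (m+2) => ℕ) 0)) with hr
    have hsr : s ≫ r = 𝟙 (std 1) := by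
      apply homZ_ext
      rw [ap_comp, ap_id]
      have h1 : ap s one = Pi.single 0 1 := el_ap _
      rw [h1]
      have h2 : ap r (Pi.single 0 1) = (Pi.single (0 : Fin (m+2)) (1 : ℕ) : Fin (m+2) → ℕ) 0 • one := by
        rw [hr]; rfl
      rw [h2, Pi.single_eq_same]
      funext i
      rw [smul_app, one_app, one_mul]
    rcases h.2 (std 1) s r hsr with h' | h'
    · exact notIniZ h'
    · -- r ≫ s = 𝟙 is false: evaluate at Pi.single 1 1
      have := congrArg
        (fun f : std (m+2) ⟶ std (m+2) => ap f (Pi.single (1 : Fin (m+2)) (1:ℕ)) 1) h'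
      simp only [ap_comp, ap_id] at this
      have hne : (0 : Fin (m+2)) ≠ (1 : Fin (m+2)) := by
        intro hh
        have := congrArg Fin.val hh
        simp at this
      have hr1 : ap r (Pi.single (1 : Fin (m+2)) (1:ℕ)) = 0 := by
        have h2 : ap r (Pi.single (1 : Fin (m+2)) (1:ℕ))
            = (Pi.single (1 : Fin (m+2)) (1 : ℕ) : Fin (m+2) → ℕ) 0 • one := by
          rw [hr]; rfl
        rw [h2, Pi.single_eq_of_ne hne]
        funext i
        rw [smul_app, zero_mul, zero_app]
      rw [hr1, ap_zero] at this
      simp [Pi.single_eq_same] at this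

theorem inner (φ : Aut (Cat.of FCM)) : Nonempty ((φ.hom.toFunctor : FCM ⥤ FCM) ≅ 𝟭 FCM) := by
  let E : FCM ≌ FCM := Cat.equivOfIso φ
  let F : FCM ⥤ FCM := φ.hom.toFunctor
  haveI : F.IsEquivalence := E.isEquivalence_functor
  have hp : Pone (F.obj (std 1)) := (pone).transfer E
  obtain ⟨n, ⟨eqn⟩⟩ := classify (F.obj (std 1))
  have hiso : F.obj (std 1) ≅ std n := isoOfAddEquiv eqn
  have hn : n = 1 := pone_refute n (hp.of_iso hiso)
  subst hn
  have e : std 1 ≅ F.obj (std 1) := hiso.symm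
  exact master F (std 1) (std 2) (std 0) i₁ i₂ dg toO fro
    (fun f g => hto f g) (fun f g => hfro f g) (fun x y => cp x y)
    (fun x y => cp₁ x y) (fun x y => cp₂ x y) (fun h h' => cpu h h')
    pm δ₁ δ₂ (fun g g' => gen g g') real e

end FCM

/-- every automorphism of the category of finitely generated free abelian
groups is inner, and every automorphism of the category of finitely generated free
commutative monoids is inner. -/
theorem stmt10 :
    (∀ φ : Aut (Cat.of FAb), Nonempty ((φ.hom.toFunctor : FAb ⥤ FAb) ≅ 𝟭 FAb)) ∧
    (∀ φ : Aut (Cat.of FCM), Nonempty ((φ.hom.toFunctor : FCM ⥤ FCM) ≅ 𝟭 FCM)) := by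
  exact ⟨fun φ => FAb.inner φ, fun φ => FCM.inner φ⟩
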